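/- Let g : ℕ × ℤ → ℤ be the iterated-claw coefficient function defined by the recurrence g(n,i) = 20g(n-1,i-1) + 24g(n-2,i-1) - 64g(n-2,i-2) - 384g(n-3,i-3) (n≥3) with the initial values g(0,0)=2, g(0,1)=2, g(1,1)=40, g(1,2)=24, g(2,1)=48, g(2,2)=720, g(2,3)=256 and g=0 elsewhere for n≤2 and for i<0. Then for each n, the leading coefficient satisfies g(n, n+1) = 4^n · Σ_{k=0}^{⌊(n+1)/2⌋} C(n+2, 2k+1) · 3^k. -/
import Mathlib

private def Osum (m : ℕ) : ℤ := ∑ k ∈ Finset.range (m+1), (m.choose (2*k+1) : ℤ) * 3^k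
private def Esum (m : ℕ) : ℤ := ∑ k ∈ Finset.range (m+1), (m.choose (2*k) : ℤ) * 3^k

private lemma Oext (m : ℕ) : Osum m = ∑ k ∈ Finset.range (m+2), (m.choose (2*k+1) : ℤ) * 3^k := by
  unfold Osum
  rw [Finset.sum_range_succ (fun k => (m.choose (2*k+1) : ℤ) * 3^k) (m+1),
    Nat.choose_eq_zero_of_lt (by omega : m < 2*(m+1)+1)]
  simp

private lemma Eext (m : ℕ) : Esum m = ∑ k ∈ Finset.range (m+2), (m.choose (2*k) : ℤ) * 3^k := by
  unfold Esum
  rw [Finset.sum_range_succ (fun k => (m.choose (2*k) : ℤ) * 3^k) (m+1),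
    Nat.choose_eq_zero_of_lt (by omega : m < 2*(m+1))]
  simp

private lemma hO (m : ℕ) : Osum (m+1) = Osum m + Esum m := by
  rw [Oext m, Eext m, ← Finset.sum_add_distrib]
  unfold Osum
  refine Finset.sum_congr rfl fun k _ => ?_
  rw [Nat.choose_succ_succ m (2*k)]
  push_cast; ring

private lemma hE (m : ℕ) : Esum (m+1) = Esum m + 3 * Osum m := by
  have A : Esum (m+1)
      = (∑ k ∈ Finset.range (m+1), ((m+1).choose (2*(k+1)) : ℤ) * 3^(k+1)) + 1 := by
    unfold Esum
    rw [Finset.sum_range_succ' (fun k => ((m+1).choose (2*k) : ℤ) * 3^k) (m+1)]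
    norm_num
  have h1 : ∀ k ∈ Finset.range (m+1), ((m+1).choose (2*(k+1)) : ℤ) * 3^(k+1)
      = (m.choose (2*k+1) : ℤ) * 3^(k+1) + (m.choose (2*k+1+1) : ℤ) * 3^(k+1) := by
    intro k _
    rw [show 2*(k+1) = (2*k+1)+1 by ring, Nat.choose_succ_succ m (2*k+1)]
    push_cast; ring
  have e1 : Esum m = (∑ k ∈ Finset.range (m+1), (m.choose (2*k+1+1) : ℤ) * 3^(k+1)) + 1 := by
    rw [Eext m, Finset.sum_range_succ' (fun k => (m.choose (2*k) : ℤ) * 3^k) (m+1)]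
    norm_num
    exact Finset.sum_congr rfl fun k _ => by rw [show 2*(k+1) = 2*k+1+1 by ring]
  have e2 : ∑ k ∈ Finset.range (m+1), (m.choose (2*k+1) : ℤ) * 3^(k+1)
      = 3 * Osum m := by
    unfold Osum
    rw [Finset.mul_sum]
    exact Finset.sum_congr rfl (fun k _ => by ring)
  rw [A, Finset.sum_congr rfl h1, Finset.sum_add_distrib, e2]
  linarith [e1]

private lemma hOrec (m : ℕ) : Osum (m+2) = 2 * Osum (m+1) + 2 * Osum m := by
  have h1 : Osum (m+2) = Osum (m+1) + Esum (m+1) := hO (m+1)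
  have h2 := hE m
  have h3 := hO m
  linarith

private lemma sum_trunc (n : ℕ) :
    ∑ k ∈ Finset.range ((n+1)/2+1), ((n+2).choose (2*k+1) : ℤ) * 3^k = Osum (n+2) := by
  unfold Osum
  refine Finset.sum_subset ?_ ?_
  · intro k hk
    simp only [Finset.mem_range] at *
    omega
  · intro k _ hk
    simp only [Finset.mem_range] at hk
    rw [Nat.choose_eq_zero_of_lt (by omega : n+2 < 2*k+1)]
    simp

theorem stmt6 (g : ℕ × ℤ → ℤ)
    (hneg : ∀ n : ℕ, ∀ i : ℤ, i < 0 → g (n, i) = 0)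
    (h00 : g (0, 0) = 2) (h01 : g (0, 1) = 2)
    (h11 : g (1, 1) = 40) (h12 : g (1, 2) = 24)
    (h21 : g (2, 1) = 48) (h22 : g (2, 2) = 720) (h23 : g (2, 3) = 256)
    (hzero : ∀ n : ℕ, ∀ i : ℤ, n ≤ 2 →
      (n, i) ∉ ({(0, 0), (0, 1), (1, 1), (1, 2), (2, 1), (2, 2), (2, 3)} : Set (ℕ × ℤ)) →
      g (n, i) = 0)
    (hrec : ∀ n : ℕ, ∀ i : ℤ, g (n + 3, i) =
      20 * g (n + 2, i - 1) + 24 * g (n + 1, i - 1) - 64 * g (n + 1, i - 2)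
        - 384 * g (n, i - 3)) :
    ∀ n : ℕ, g (n, (n : ℤ) + 1) = 4 ^ n *
      ∑ k ∈ Finset.range ((n + 1) / 2 + 1), ((n + 2).choose (2 * k + 1) : ℤ) * 3 ^ k := by
  -- g vanishes above the diagonal
  have hhigh : ∀ n : ℕ, ∀ i : ℤ, (n : ℤ) + 1 < i → g (n, i) = 0 := by
    intro n
    induction n using Nat.strong_induction_on with
    | _ n ih =>
      match n with
      | 0 | 1 | 2 =>
        intro i hi
        apply hzero _ _ (by omega)
        simp only [Set.mem_insert_iff, Set.mem_singleton_iff, Prod.mk.injEq]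
        push_neg
        norm_num at hi ⊢ <;> omega
      | (n+3) =>
        intro i hi
        push_cast at hi
        rw [hrec n i,
          ih (n+2) (by omega) (i-1) (by push_cast; omega),
          ih (n+1) (by omega) (i-1) (by push_cast; omega),
          ih (n+1) (by omega) (i-2) (by push_cast; omega),
          ih n (by omega) (i-3) (by push_cast; omega)]
        ring
  have key : ∀ n : ℕ, g (n, (n : ℤ) + 1) = 4 ^ n * Osum (n + 2)
      ∧ g (n + 1, (n : ℤ) + 2) = 4 ^ (n+1) * Osum (n + 3)
      ∧ g (n + 2, (n : ℤ) + 3) = 4 ^ (n+2) * Osum (n + 4) := by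
    intro n
    induction n with
    | zero =>
      have o2 : Osum 2 = 2 := by unfold Osum; decide
      have o3 : Osum 3 = 6 := by unfold Osum; decide
      have o4 : Osum 4 = 16 := by unfold Osum; decide
      norm_num [o2, o3, o4, h01, h12, h23]
    | succ n ih =>
      obtain ⟨p0, p1, p2⟩ := ih
      refine ⟨by push_cast; exact p1, by push_cast; exact p2, ?_⟩
      have e := hrec n ((n : ℤ) + 4)
      rw [show (n:ℤ)+4-1 = (n:ℤ)+3 from by ring,
        show (n:ℤ)+4-2 = (n:ℤ)+2 from by ring,
        show (n:ℤ)+4-3 = (n:ℤ)+1 from by ring] at e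
      have z : g (n+1, (n:ℤ)+3) = 0 := hhigh (n+1) ((n:ℤ)+3) (by push_cast; omega)
      have r1 : Osum (n+5) = 2 * Osum (n+4) + 2 * Osum (n+3) := hOrec (n+3)
      have r2 : Osum (n+4) = 2 * Osum (n+3) + 2 * Osum (n+2) := hOrec (n+2)
      have goal' : g (n+3, (n:ℤ)+4) = 4^(n+3) * Osum (n+5) := by
        rw [e, p2, z, p1, p0, r1, r2]
        ring
      show g (n+1+2, ((n:ℤ)+1) + 3) = 4^(n+1+2) * Osum (n+1+4)
      rw [show ((n:ℤ)+1)+3 = (n:ℤ)+4 from by ring]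
      exact goal'
  intro n
  rw [sum_trunc n]
  exact (key n).1
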